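/- For the rational Calogero–Moser hierarchy Hamiltonians H_2(X,P) = sum_i P_i^2/2 − sum_{i≠j} 2/(X_i−X_j)^2 and H_3(X,P) = sum_i P_i^3/3 − sum_{i≠j} 4 P_i/(X_i−X_j)^2, the canonical Poisson bracket {H_2, H_3} vanishes on the set of configurations with pairwise distinct positions. -/

import Mathlib

open scoped BigOperators

/-- Canonical Poisson bracket on phase space `(X, P) ∈ ℝ^N × ℝ^N`:
`{f,g} = ∑ k (∂f/∂X_k ∂g/∂P_k − ∂g/∂X_k ∂f/∂P_k)`. -/
noncomputable def canonPB {N : ℕ}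
    (f g : ((Fin N → ℝ) × (Fin N → ℝ)) → ℝ)
    (z : (Fin N → ℝ) × (Fin N → ℝ)) : ℝ :=
  ∑ k : Fin N,
    (fderiv ℝ f z (Pi.single k 1, 0) * fderiv ℝ g z (0, Pi.single k 1)
      - fderiv ℝ g z (Pi.single k 1, 0) * fderiv ℝ f z (0, Pi.single k 1))

/-- `H₂(X,P) = ∑ᵢ Pᵢ²/2 − ∑_{i≠j} 2/(Xᵢ−Xⱼ)²`. -/
noncomputable def cmH2 {N : ℕ} (z : (Fin N → ℝ) × (Fin N → ℝ)) : ℝ :=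
  ∑ i : Fin N, (z.2 i) ^ 2 / 2
    - ∑ i : Fin N, ∑ j ∈ Finset.univ.filter (fun j => j ≠ i),
        2 / (z.1 i - z.1 j) ^ 2

/-- `H₃(X,P) = ∑ᵢ Pᵢ³/3 − ∑_{i≠j} 4 Pᵢ/(Xᵢ−Xⱼ)²`. -/
noncomputable def cmH3 {N : ℕ} (z : (Fin N → ℝ) × (Fin N → ℝ)) : ℝ :=
  ∑ i : Fin N, (z.2 i) ^ 3 / 3
    - ∑ i : Fin N, ∑ j ∈ Finset.univ.filter (fun j => j ≠ i),
        4 * z.2 i / (z.1 i - z.1 j) ^ 2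

section Aux

variable {N : ℕ}

/-- Coordinate `X_i` as a continuous linear map. -/
noncomputable def Xc (i : Fin N) : ((Fin N → ℝ) × (Fin N → ℝ)) →L[ℝ] ℝ :=
  (ContinuousLinearMap.proj i).comp (ContinuousLinearMap.fst ℝ (Fin N → ℝ) (Fin N → ℝ))

/-- Coordinate `P_i` as a continuous linear map. -/
noncomputable def Pc (i : Fin N) : ((Fin N → ℝ) × (Fin N → ℝ)) →L[ℝ] ℝ :=
  (ContinuousLinearMap.proj i).comp (ContinuousLinearMap.snd ℝ (Fin N → ℝ) (Fin N → ℝ))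

/-- Total derivative of `cmH2`. -/
noncomputable def D2 (z : (Fin N → ℝ) × (Fin N → ℝ)) :
    ((Fin N → ℝ) × (Fin N → ℝ)) →L[ℝ] ℝ :=
  (∑ i : Fin N, z.2 i • Pc i)
    - ∑ i : Fin N, ∑ j ∈ Finset.univ.filter (fun j => j ≠ i),
        (-4 / (z.1 i - z.1 j) ^ 3) • (Xc i - Xc j)

/-- Total derivative of `cmH3`. -/
noncomputable def D3 (z : (Fin N → ℝ) × (Fin N → ℝ)) :
    ((Fin N → ℝ) × (Fin N → ℝ)) →L[ℝ] ℝ :=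
  (∑ i : Fin N, (z.2 i) ^ 2 • Pc i)
    - ∑ i : Fin N, ∑ j ∈ Finset.univ.filter (fun j => j ≠ i),
        ((4 * z.2 i) • ((-2 / (z.1 i - z.1 j) ^ 3) • (Xc i - Xc j))
          + ((z.1 i - z.1 j) ^ 2)⁻¹ • ((4:ℝ) • Pc i))

lemma hasF_H2 (z : (Fin N → ℝ) × (Fin N → ℝ))
    (hdist : ∀ i j : Fin N, i ≠ j → z.1 i ≠ z.1 j) :
    HasFDerivAt cmH2 (D2 z) z := by
  have h1 : HasFDerivAt (fun w : (Fin N → ℝ) × (Fin N → ℝ) => ∑ i : Fin N, (w.2 i) ^ 2 / 2)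
      (∑ i : Fin N, z.2 i • Pc i) z := by
    apply HasFDerivAt.fun_sum
    intro i _
    have hp : HasDerivAt (fun s : ℝ => s ^ 2 / 2) (z.2 i) (z.2 i) := by
      have h := (hasDerivAt_pow 2 (z.2 i)).div_const 2
      refine h.congr_deriv ?_
      simp
    exact hp.comp_hasFDerivAt z (Pc i).hasFDerivAt
  have h2 : HasFDerivAt
      (fun w : (Fin N → ℝ) × (Fin N → ℝ) =>
        ∑ i : Fin N, ∑ j ∈ Finset.univ.filter (fun j => j ≠ i), 2 / (w.1 i - w.1 j) ^ 2)
      (∑ i : Fin N, ∑ j ∈ Finset.univ.filter (fun j => j ≠ i),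
        (-4 / (z.1 i - z.1 j) ^ 3) • (Xc i - Xc j)) z := by
    apply HasFDerivAt.fun_sum; intro i _
    apply HasFDerivAt.fun_sum; intro j hj
    have hij : z.1 i - z.1 j ≠ 0 := by
      apply sub_ne_zero.mpr
      exact hdist i j (Ne.symm (Finset.mem_filter.mp hj).2)
    have hs : HasDerivAt (fun s : ℝ => 2 / s ^ 2) (-4 / (z.1 i - z.1 j) ^ 3) (z.1 i - z.1 j) := by
      have h := (hasDerivAt_const (z.1 i - z.1 j) (2:ℝ)).div (hasDerivAt_pow 2 (z.1 i - z.1 j))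
        (pow_ne_zero 2 hij)
      refine h.congr_deriv ?_
      field_simp
      ring
    exact hs.comp_hasFDerivAt (f := fun w => w.1 i - w.1 j) z ((Xc i).hasFDerivAt.sub (Xc j).hasFDerivAt)
  exact h1.sub h2

lemma hasF_H3 (z : (Fin N → ℝ) × (Fin N → ℝ))
    (hdist : ∀ i j : Fin N, i ≠ j → z.1 i ≠ z.1 j) :
    HasFDerivAt cmH3 (D3 z) z := by
  have h1 : HasFDerivAt (fun w : (Fin N → ℝ) × (Fin N → ℝ) => ∑ i : Fin N, (w.2 i) ^ 3 / 3)
      (∑ i : Fin N, (z.2 i) ^ 2 • Pc i) z := by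
    apply HasFDerivAt.fun_sum
    intro i _
    have hp : HasDerivAt (fun s : ℝ => s ^ 3 / 3) ((z.2 i) ^ 2) (z.2 i) := by
      have h := (hasDerivAt_pow 3 (z.2 i)).div_const 3
      refine h.congr_deriv ?_
      field_simp
      ring
    exact hp.comp_hasFDerivAt z (Pc i).hasFDerivAt
  have h2 : HasFDerivAt
      (fun w : (Fin N → ℝ) × (Fin N → ℝ) =>
        ∑ i : Fin N, ∑ j ∈ Finset.univ.filter (fun j => j ≠ i),
          4 * w.2 i / (w.1 i - w.1 j) ^ 2)
      (∑ i : Fin N, ∑ j ∈ Finset.univ.filter (fun j => j ≠ i),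
        ((4 * z.2 i) • ((-2 / (z.1 i - z.1 j) ^ 3) • (Xc i - Xc j))
          + ((z.1 i - z.1 j) ^ 2)⁻¹ • ((4:ℝ) • Pc i))) z := by
    apply HasFDerivAt.fun_sum; intro i _
    apply HasFDerivAt.fun_sum; intro j hj
    have hij : z.1 i - z.1 j ≠ 0 := by
      apply sub_ne_zero.mpr
      exact hdist i j (Ne.symm (Finset.mem_filter.mp hj).2)
    have hc : HasFDerivAt (fun w : (Fin N → ℝ) × (Fin N → ℝ) => 4 * w.2 i)
        ((4:ℝ) • Pc i) z := (Pc i).hasFDerivAt.const_mul 4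
    have hs : HasDerivAt (fun s : ℝ => (s ^ 2)⁻¹) (-2 / (z.1 i - z.1 j) ^ 3)
        (z.1 i - z.1 j) := by
      have h := (hasDerivAt_pow 2 (z.1 i - z.1 j)).inv (pow_ne_zero 2 hij)
      refine h.congr_deriv ?_
      field_simp
      ring
    have hd : HasFDerivAt
        (fun w : (Fin N → ℝ) × (Fin N → ℝ) => ((w.1 i - w.1 j) ^ 2)⁻¹)
        ((-2 / (z.1 i - z.1 j) ^ 3) • (Xc i - Xc j)) z :=
      hs.comp_hasFDerivAt (h₂ := fun s : ℝ => (s ^ 2)⁻¹) (f := fun w : (Fin N → ℝ) × (Fin N → ℝ) => w.1 i - w.1 j) z ((Xc i).hasFDerivAt.sub (Xc j).hasFDerivAt)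
    have := hc.fun_mul hd
    simpa [div_eq_mul_inv] using this
  exact h1.sub h2

lemma delta_sum (c : Fin N → Fin N → ℝ) (k : Fin N) :
    ∑ i : Fin N, ∑ j ∈ Finset.univ.filter (fun j => j ≠ i),
      c i j * ((if i = k then (1:ℝ) else 0) - (if j = k then (1:ℝ) else 0))
    = ∑ j ∈ Finset.univ.filter (fun j => j ≠ k), c k j
      - ∑ i ∈ Finset.univ.filter (fun i => i ≠ k), c i k := by
  have e : ∀ i : Fin N, ∑ j ∈ Finset.univ.filter (fun j => j ≠ i),
      c i j * ((if i = k then (1:ℝ) else 0) - (if j = k then (1:ℝ) else 0))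
      = (if i = k then ∑ j ∈ Finset.univ.filter (fun j => j ≠ i), c i j else 0)
        - (if k ≠ i then c i k else 0) := by
    intro i
    rw [show (∑ j ∈ Finset.univ.filter (fun j => j ≠ i),
        c i j * ((if i = k then (1:ℝ) else 0) - (if j = k then (1:ℝ) else 0)))
      = (∑ j ∈ Finset.univ.filter (fun j => j ≠ i), c i j * (if i = k then (1:ℝ) else 0))
        - (∑ j ∈ Finset.univ.filter (fun j => j ≠ i), c i j * (if j = k then (1:ℝ) else 0))
      from by rw [← Finset.sum_sub_distrib]; exact Finset.sum_congr rfl fun j _ => by ring]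
    congr 1
    · rw [← Finset.sum_mul]
      split <;> simp
    · rw [show (∑ j ∈ Finset.univ.filter (fun j => j ≠ i), c i j * (if j = k then (1:ℝ) else 0))
          = ∑ j ∈ Finset.univ.filter (fun j => j ≠ i), (if j = k then c i j else 0)
        from Finset.sum_congr rfl fun j _ => by rw [mul_ite, mul_one, mul_zero]]
      rw [Finset.sum_ite_eq' (Finset.univ.filter (fun j => j ≠ i)) k (fun j => c i j)]
      simp
  rw [Finset.sum_congr rfl fun i _ => e i, Finset.sum_sub_distrib]
  congr 1
  · simp
  · rw [← Finset.sum_filter]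
    apply Finset.sum_congr _ fun i _ => rfl
    ext i; simp [ne_comm]

lemma evD2X (z : (Fin N → ℝ) × (Fin N → ℝ)) (k : Fin N) :
    D2 z (Pi.single k 1, 0)
      = -((∑ j ∈ Finset.univ.filter (fun j => j ≠ k), -4 / (z.1 k - z.1 j) ^ 3)
          - ∑ i ∈ Finset.univ.filter (fun i => i ≠ k), -4 / (z.1 i - z.1 k) ^ 3) := by
  have h := delta_sum (N := N) (fun i j => -4 / (z.1 i - z.1 j) ^ 3) k
  simp only [] at h
  simp [D2, Xc, Pc, Pi.single_apply] at h ⊢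
  linarith

lemma evD2P (z : (Fin N → ℝ) × (Fin N → ℝ)) (k : Fin N) :
    D2 z (0, Pi.single k 1) = z.2 k := by
  simp [D2, Xc, Pc, Pi.single_apply, Finset.sum_ite_eq']

lemma evD3X (z : (Fin N → ℝ) × (Fin N → ℝ)) (k : Fin N) :
    D3 z (Pi.single k 1, 0)
      = -((∑ j ∈ Finset.univ.filter (fun j => j ≠ k),
            4 * z.2 k * (-2 / (z.1 k - z.1 j) ^ 3))
          - ∑ i ∈ Finset.univ.filter (fun i => i ≠ k),
            4 * z.2 i * (-2 / (z.1 i - z.1 k) ^ 3)) := by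
  have h := delta_sum (N := N) (fun i j => 4 * z.2 i * (-2 / (z.1 i - z.1 j) ^ 3)) k
  simp [D3, Xc, Pc, Pi.single_apply]
  have e : ∀ i j : Fin N, 4 * z.2 i * (-2 / (z.1 i - z.1 j) ^ 3
        * ((if i = k then (1:ℝ) else 0) - if j = k then 1 else 0))
      = 4 * z.2 i * (-2 / (z.1 i - z.1 j) ^ 3)
        * ((if i = k then (1:ℝ) else 0) - if j = k then 1 else 0) := fun i j => by ring
  simp only [e]
  linarith [h]

lemma evD3P (z : (Fin N → ℝ) × (Fin N → ℝ)) (k : Fin N) :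
    D3 z (0, Pi.single k 1)
      = (z.2 k) ^ 2
        - ∑ j ∈ Finset.univ.filter (fun j => j ≠ k), ((z.1 k - z.1 j) ^ 2)⁻¹ * 4 := by
  simp [D3, Xc, Pc, Pi.single_apply, Finset.sum_ite_eq', mul_ite, Finset.sum_ite_irrel]

lemma sum_pair_antisymm (f : Fin N → Fin N → ℝ) (hf : ∀ i j, f i j = - f j i) :
    ∑ i : Fin N, ∑ j ∈ Finset.univ.filter (fun j => j ≠ i), f i j = 0 := by
  have e1 : ∑ i : Fin N, ∑ j ∈ Finset.univ.filter (fun j => j ≠ i), f i j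
      = ∑ i : Fin N, ∑ j : Fin N, if j ≠ i then f i j else 0 :=
    Finset.sum_congr rfl fun i _ => Finset.sum_filter _ _
  have e2 : ∑ i : Fin N, ∑ j ∈ Finset.univ.filter (fun j => j ≠ i), f i j
      = ∑ i : Fin N, ∑ j : Fin N, if i ≠ j then f j i else 0 := by
    rw [e1, Finset.sum_comm]
  have hzero : ∑ i : Fin N, ∑ j : Fin N,
      ((if j ≠ i then f i j else 0) + (if i ≠ j then f j i else 0)) = 0 := by
    apply Finset.sum_eq_zero; intro i _
    apply Finset.sum_eq_zero; intro j _
    by_cases h : j = i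
    · simp [h]
    · simp only [h, Ne.symm h, ne_eq, not_false_iff, if_true]
      rw [hf i j]; ring
  have hsplit : ∑ i : Fin N, ∑ j : Fin N,
      ((if j ≠ i then f i j else 0) + (if i ≠ j then f j i else 0))
      = (∑ i : Fin N, ∑ j : Fin N, if j ≠ i then f i j else 0)
        + ∑ i : Fin N, ∑ j : Fin N, if i ≠ j then f j i else 0 := by
    simp only [← Finset.sum_add_distrib]
  linarith [e1, e2, hzero, hsplit]

/-- Indicator of pairwise distinctness times `g`. -/
noncomputable def indG (g : Fin N → Fin N → Fin N → ℝ) (k j l : Fin N) : ℝ :=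
  if j ≠ k ∧ l ≠ k ∧ l ≠ j then g k j l else 0

lemma sum_triple_perm (g : Fin N → Fin N → Fin N → ℝ)
    (hg : ∀ a b c : Fin N, a ≠ b → a ≠ c → b ≠ c →
      g a b c + g a c b + g b a c + g b c a + g c a b + g c b a = 0) :
    ∑ k : Fin N, ∑ j ∈ Finset.univ.filter (fun j => j ≠ k),
      ∑ l ∈ (Finset.univ.filter (fun l => l ≠ k)).erase j, g k j l = 0 := by
  have e : ∑ k : Fin N, ∑ j ∈ Finset.univ.filter (fun j => j ≠ k),
      ∑ l ∈ (Finset.univ.filter (fun l => l ≠ k)).erase j, g k j l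
      = ∑ k : Fin N, ∑ j : Fin N, ∑ l : Fin N, indG g k j l := by
    apply Finset.sum_congr rfl; intro k _
    rw [Finset.sum_filter]
    apply Finset.sum_congr rfl; intro j _
    by_cases hj : j = k
    · rw [if_neg (by simp [hj])]
      symm; apply Finset.sum_eq_zero; intro l _
      simp [indG, hj]
    · rw [if_pos hj]
      have hset : (Finset.univ.filter (fun l => l ≠ k)).erase j
          = Finset.univ.filter (fun l => l ≠ k ∧ l ≠ j) := by
        ext l; simp [Finset.mem_erase, and_comm]
      rw [hset, Finset.sum_filter]
      apply Finset.sum_congr rfl; intro l _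
      simp [indG, hj]
  rw [e]
  have c12 : ∀ (H : Fin N → Fin N → Fin N → ℝ),
      ∑ k : Fin N, ∑ j : Fin N, ∑ l : Fin N, H k j l
      = ∑ k : Fin N, ∑ j : Fin N, ∑ l : Fin N, H j k l := fun H => Finset.sum_comm
  have c23 : ∀ (H : Fin N → Fin N → Fin N → ℝ),
      ∑ k : Fin N, ∑ j : Fin N, ∑ l : Fin N, H k j l
      = ∑ k : Fin N, ∑ j : Fin N, ∑ l : Fin N, H k l j := fun H =>
    Finset.sum_congr rfl fun k _ => Finset.sum_comm
  have t2 : (∑ k : Fin N, ∑ j : Fin N, ∑ l : Fin N, indG g k j l)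
      = ∑ k : Fin N, ∑ j : Fin N, ∑ l : Fin N, indG g k l j := c23 _
  have t3 : (∑ k : Fin N, ∑ j : Fin N, ∑ l : Fin N, indG g k j l)
      = ∑ k : Fin N, ∑ j : Fin N, ∑ l : Fin N, indG g j k l := c12 _
  have t4 : (∑ k : Fin N, ∑ j : Fin N, ∑ l : Fin N, indG g k j l)
      = ∑ k : Fin N, ∑ j : Fin N, ∑ l : Fin N, indG g j l k :=
    (c23 _).trans (c12 (fun a b c => indG g a c b))
  have t5 : (∑ k : Fin N, ∑ j : Fin N, ∑ l : Fin N, indG g k j l)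
      = ∑ k : Fin N, ∑ j : Fin N, ∑ l : Fin N, indG g l k j :=
    (c12 _).trans (c23 (fun a b c => indG g b a c))
  have t6 : (∑ k : Fin N, ∑ j : Fin N, ∑ l : Fin N, indG g k j l)
      = ∑ k : Fin N, ∑ j : Fin N, ∑ l : Fin N, indG g l j k :=
    t4.trans (c23 (fun a b c => indG g b c a))
  have hzero : ∑ k : Fin N, ∑ j : Fin N, ∑ l : Fin N,
      (indG g k j l + indG g k l j + indG g j k l + indG g j l k
        + indG g l k j + indG g l j k) = 0 := by
    apply Finset.sum_eq_zero; intro k _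
    apply Finset.sum_eq_zero; intro j _
    apply Finset.sum_eq_zero; intro l _
    by_cases h1 : j = k
    · subst h1; simp [indG]
    by_cases h2 : l = k
    · subst h2; simp [indG]
    by_cases h3 : l = j
    · subst h3; simp [indG]
    · simp only [indG, h1, h2, h3, Ne.symm h1, Ne.symm h2, Ne.symm h3, ne_eq,
        not_false_iff, and_self, if_true]
      have := hg k j l (Ne.symm h1) (Ne.symm h2) (Ne.symm h3)
      linarith
  have hsplit : ∑ k : Fin N, ∑ j : Fin N, ∑ l : Fin N,
      (indG g k j l + indG g k l j + indG g j k l + indG g j l k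
        + indG g l k j + indG g l j k)
      = (∑ k : Fin N, ∑ j : Fin N, ∑ l : Fin N, indG g k j l)
        + (∑ k : Fin N, ∑ j : Fin N, ∑ l : Fin N, indG g k l j)
        + (∑ k : Fin N, ∑ j : Fin N, ∑ l : Fin N, indG g j k l)
        + (∑ k : Fin N, ∑ j : Fin N, ∑ l : Fin N, indG g j l k)
        + (∑ k : Fin N, ∑ j : Fin N, ∑ l : Fin N, indG g l k j)
        + (∑ k : Fin N, ∑ j : Fin N, ∑ l : Fin N, indG g l j k) := by
    simp only [← Finset.sum_add_distrib]
  linarith [t2, t3, t4, t5, t6, hzero, hsplit]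

end Aux

/-- The first two rational Calogero–Moser Hamiltonians are in involution:
`{H₂, H₃} = 0` at every phase point with pairwise distinct positions. -/
theorem cm_H2_H3_involution {N : ℕ}
    (z : (Fin N → ℝ) × (Fin N → ℝ))
    (hdist : ∀ i j : Fin N, i ≠ j → z.1 i ≠ z.1 j) :
    canonPB (cmH2 (N := N)) (cmH3 (N := N)) z = 0 := by
  have h2fd : fderiv ℝ cmH2 z = D2 z := (hasF_H2 z hdist).fderiv
  have h3fd : fderiv ℝ cmH3 z = D3 z := (hasF_H3 z hdist).fderiv
  unfold canonPB
  rw [h2fd, h3fd]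
  have key : ∀ k : Fin N,
      D2 z (Pi.single k 1, 0) * D3 z (0, Pi.single k 1)
        - D3 z (Pi.single k 1, 0) * D2 z (0, Pi.single k 1)
      = (∑ j ∈ Finset.univ.filter (fun j => j ≠ k),
          -8 * z.2 j * z.2 k / (z.1 k - z.1 j) ^ 3)
        - ∑ j ∈ Finset.univ.filter (fun j => j ≠ k),
            ∑ l ∈ Finset.univ.filter (fun l => l ≠ k),
              32 / (z.1 k - z.1 j) ^ 3 * ((z.1 k - z.1 l) ^ 2)⁻¹ := by
    intro k
    rw [evD2X, evD2P, evD3X, evD3P]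
    have hne : ∀ j ∈ Finset.univ.filter (fun j => j ≠ k), z.1 k - z.1 j ≠ 0 := by
      intro j hj
      exact sub_ne_zero.mpr (hdist k j (Ne.symm (Finset.mem_filter.mp hj).2))
    have hne' : ∀ j ∈ Finset.univ.filter (fun j => j ≠ k), z.1 j - z.1 k ≠ 0 := by
      intro j hj
      exact sub_ne_zero.mpr (hdist j k (Finset.mem_filter.mp hj).2)
    have hB : (∑ i ∈ Finset.univ.filter (fun i => i ≠ k), -4 / (z.1 i - z.1 k) ^ 3)
        = ∑ i ∈ Finset.univ.filter (fun i => i ≠ k), 4 / (z.1 k - z.1 i) ^ 3 := by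
      apply Finset.sum_congr rfl; intro i hi
      rw [show z.1 i - z.1 k = -(z.1 k - z.1 i) by ring,
        Odd.neg_pow (by decide : Odd 3), div_neg, neg_div, neg_neg]
    have hF : (∑ i ∈ Finset.univ.filter (fun i => i ≠ k),
          4 * z.2 i * (-2 / (z.1 i - z.1 k) ^ 3))
        = ∑ i ∈ Finset.univ.filter (fun i => i ≠ k),
            8 * z.2 i / (z.1 k - z.1 i) ^ 3 := by
      apply Finset.sum_congr rfl; intro i hi
      rw [show z.1 i - z.1 k = -(z.1 k - z.1 i) by ring,
        Odd.neg_pow (by decide : Odd 3), div_neg]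
      ring
    rw [hB, hF]
    have hAB : -((∑ j ∈ Finset.univ.filter (fun j => j ≠ k), -4 / (z.1 k - z.1 j) ^ 3)
          - ∑ i ∈ Finset.univ.filter (fun i => i ≠ k), 4 / (z.1 k - z.1 i) ^ 3)
        = ∑ j ∈ Finset.univ.filter (fun j => j ≠ k), 8 / (z.1 k - z.1 j) ^ 3 := by
      rw [neg_sub, ← Finset.sum_sub_distrib]
      apply Finset.sum_congr rfl; intro j _
      ring
    have hEF : -((∑ j ∈ Finset.univ.filter (fun j => j ≠ k),
            4 * z.2 k * (-2 / (z.1 k - z.1 j) ^ 3))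
          - ∑ i ∈ Finset.univ.filter (fun i => i ≠ k), 8 * z.2 i / (z.1 k - z.1 i) ^ 3)
        = ∑ j ∈ Finset.univ.filter (fun j => j ≠ k),
            (8 * z.2 j + 8 * z.2 k) / (z.1 k - z.1 j) ^ 3 := by
      rw [neg_sub, ← Finset.sum_sub_distrib]
      apply Finset.sum_congr rfl; intro j _
      ring
    rw [hAB, hEF, mul_sub, Finset.sum_mul_sum]
    rw [Finset.sum_mul, Finset.sum_mul]
    have s1 : (∑ j ∈ Finset.univ.filter (fun j => j ≠ k), 8 / (z.1 k - z.1 j) ^ 3 * (z.2 k) ^ 2)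
        - ∑ j ∈ Finset.univ.filter (fun j => j ≠ k),
            (8 * z.2 j + 8 * z.2 k) / (z.1 k - z.1 j) ^ 3 * z.2 k
        = ∑ j ∈ Finset.univ.filter (fun j => j ≠ k),
            -8 * z.2 j * z.2 k / (z.1 k - z.1 j) ^ 3 := by
      rw [← Finset.sum_sub_distrib]
      apply Finset.sum_congr rfl; intro j _
      field_simp
      ring
    have s2 : (∑ j ∈ Finset.univ.filter (fun j => j ≠ k),
          ∑ l ∈ Finset.univ.filter (fun l => l ≠ k),
            8 / (z.1 k - z.1 j) ^ 3 * (((z.1 k - z.1 l) ^ 2)⁻¹ * 4))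
        = ∑ j ∈ Finset.univ.filter (fun j => j ≠ k),
            ∑ l ∈ Finset.univ.filter (fun l => l ≠ k),
              32 / (z.1 k - z.1 j) ^ 3 * ((z.1 k - z.1 l) ^ 2)⁻¹ := by
      apply Finset.sum_congr rfl; intro j _
      apply Finset.sum_congr rfl; intro l _
      ring
    linarith [s1, s2]
  rw [Finset.sum_congr rfl fun k _ => key k, Finset.sum_sub_distrib]
  have hp : ∑ k : Fin N, ∑ j ∈ Finset.univ.filter (fun j => j ≠ k),
      -8 * z.2 j * z.2 k / (z.1 k - z.1 j) ^ 3 = 0 := by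
    apply sum_pair_antisymm
    intro i j
    rw [show z.1 i - z.1 j = -(z.1 j - z.1 i) by ring,
      Odd.neg_pow (by decide : Odd 3), div_neg]
    ring
  have ht : ∑ k : Fin N, ∑ j ∈ Finset.univ.filter (fun j => j ≠ k),
      ∑ l ∈ Finset.univ.filter (fun l => l ≠ k),
        32 / (z.1 k - z.1 j) ^ 3 * ((z.1 k - z.1 l) ^ 2)⁻¹ = 0 := by
    have esplit : ∀ k : Fin N, ∀ j ∈ Finset.univ.filter (fun j => j ≠ k),
        ∑ l ∈ Finset.univ.filter (fun l => l ≠ k),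
          32 / (z.1 k - z.1 j) ^ 3 * ((z.1 k - z.1 l) ^ 2)⁻¹
        = 32 / (z.1 k - z.1 j) ^ 3 * ((z.1 k - z.1 j) ^ 2)⁻¹
          + ∑ l ∈ (Finset.univ.filter (fun l => l ≠ k)).erase j,
              32 / (z.1 k - z.1 j) ^ 3 * ((z.1 k - z.1 l) ^ 2)⁻¹ := by
      intro k j hj
      exact (Finset.add_sum_erase _ _ hj).symm
    rw [Finset.sum_congr rfl fun k _ => Finset.sum_congr rfl fun j hj => esplit k j hj]
    simp only [Finset.sum_add_distrib]
    have hdiag : ∑ k : Fin N, ∑ j ∈ Finset.univ.filter (fun j => j ≠ k),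
        32 / (z.1 k - z.1 j) ^ 3 * ((z.1 k - z.1 j) ^ 2)⁻¹ = 0 := by
      apply sum_pair_antisymm
      intro i j
      rw [show z.1 i - z.1 j = -(z.1 j - z.1 i) by ring,
        Odd.neg_pow (by decide : Odd 3), Even.neg_pow (by decide : Even 2), div_neg]
      ring
    have htrip : ∑ k : Fin N, ∑ j ∈ Finset.univ.filter (fun j => j ≠ k),
        ∑ l ∈ (Finset.univ.filter (fun l => l ≠ k)).erase j,
          32 / (z.1 k - z.1 j) ^ 3 * ((z.1 k - z.1 l) ^ 2)⁻¹ = 0 := by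
      apply sum_triple_perm
      intro a b c hab hac hbc
      have h1 : z.1 a - z.1 b ≠ 0 := sub_ne_zero.mpr (hdist a b hab)
      have h2 : z.1 a - z.1 c ≠ 0 := sub_ne_zero.mpr (hdist a c hac)
      have h3 : z.1 b - z.1 c ≠ 0 := sub_ne_zero.mpr (hdist b c hbc)
      have h4 : z.1 b - z.1 a ≠ 0 := sub_ne_zero.mpr (hdist b a hab.symm)
      have h5 : z.1 c - z.1 a ≠ 0 := sub_ne_zero.mpr (hdist c a hac.symm)
      have h6 : z.1 c - z.1 b ≠ 0 := sub_ne_zero.mpr (hdist c b hbc.symm)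
      field_simp
      ring
    rw [hdiag, htrip]
    ring
  rw [hp, ht]
  ring
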